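/- (Theorem 2, dual part.) Let A_j = A_i ∪ {j} with j ∉ A_i, and suppose both G_{A_i} and G_{A_j} have full row rank. Define c_i = c_j, v_i = v_j, and d̃_i = −d̃_j. Then for every θ ∈ ℝⁿ, the extended dual solution obtained by removing constraint j from A_j satisfies λ̃_{A_i}(θ) = λ̃_{A_j}(θ) − d̃_i (c_i + v_iᵀθ) in ℝ^{n_c}. -/

import Mathlib

open Matrix

noncomputable section
namespace MpQP

/-- Submatrix of the rows of `G` indexed by the finite index set `A`. -/
def subRows {nc p : ℕ} (G : Matrix (Fin nc) (Fin p) ℝ) (A : Finset (Fin nc)) :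
    Matrix A (Fin p) ℝ := Matrix.of fun i k => G i.val k

/-- Subvector of `b` indexed by `A`. -/
def subVec {nc : ℕ} (b : Fin nc → ℝ) (A : Finset (Fin nc)) : A → ℝ := fun i => b i.val

/-- `G_A` has full row rank, i.e. the rows of `G` indexed by `A` are linearly independent. -/
def FullRowRank {nc m : ℕ} (G : Matrix (Fin nc) (Fin m) ℝ) (A : Finset (Fin nc)) : Prop :=
  LinearIndependent ℝ (fun i : A => G i.val)

/-- The parametric dual solution `λ_A(θ) = −(G_A H⁻¹ G_Aᵀ)⁻¹ (b_A + S_A θ)`. -/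
def lamOf {m n nc : ℕ} (H : Matrix (Fin m) (Fin m) ℝ) (G : Matrix (Fin nc) (Fin m) ℝ)
    (b : Fin nc → ℝ) (S : Matrix (Fin nc) (Fin n) ℝ) (A : Finset (Fin nc))
    (θ : Fin n → ℝ) : A → ℝ :=
  -((subRows G A * H⁻¹ * (subRows G A)ᵀ)⁻¹.mulVec
      (fun i => b i.val + S.mulVec θ i.val))

/-- The parametric primal solution `z_A(θ) = −H⁻¹ G_Aᵀ λ_A(θ)`. -/
def zOf {m n nc : ℕ} (H : Matrix (Fin m) (Fin m) ℝ) (G : Matrix (Fin nc) (Fin m) ℝ)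
    (b : Fin nc → ℝ) (S : Matrix (Fin nc) (Fin n) ℝ) (A : Finset (Fin nc))
    (θ : Fin n → ℝ) : Fin m → ℝ :=
  -((H⁻¹ * (subRows G A)ᵀ).mulVec (lamOf H G b S A θ))

/-- `λ̃_A(θ) ∈ ℝ^{n_c}`: the dual solution extended by zeros outside `A`. -/
def lamExt {m n nc : ℕ} (H : Matrix (Fin m) (Fin m) ℝ) (G : Matrix (Fin nc) (Fin m) ℝ)
    (b : Fin nc → ℝ) (S : Matrix (Fin nc) (Fin n) ℝ) (A : Finset (Fin nc))
    (θ : Fin n → ℝ) : Fin nc → ℝ :=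
  fun k => if h : k ∈ A then lamOf H G b S A θ ⟨k, h⟩ else 0

/-- `W = G_A H⁻¹ G_Aᵀ`. -/
def Wmat {m nc : ℕ} (H : Matrix (Fin m) (Fin m) ℝ) (G : Matrix (Fin nc) (Fin m) ℝ)
    (A : Finset (Fin nc)) : Matrix A A ℝ :=
  subRows G A * H⁻¹ * (subRows G A)ᵀ

/-- `w = G_A H⁻¹ G_jᵀ`. -/
def wvec {m nc : ℕ} (H : Matrix (Fin m) (Fin m) ℝ) (G : Matrix (Fin nc) (Fin m) ℝ)
    (A : Finset (Fin nc)) (j : Fin nc) : A → ℝ :=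
  (subRows G A * H⁻¹).mulVec (G j)

/-- `w₀ = G_j H⁻¹ G_jᵀ`. -/
def w0 {m nc : ℕ} (H : Matrix (Fin m) (Fin m) ℝ) (G : Matrix (Fin nc) (Fin m) ℝ)
    (j : Fin nc) : ℝ :=
  G j ⬝ᵥ H⁻¹.mulVec (G j)

/-- The Schur complement `C = w₀ − wᵀ W⁻¹ w`. -/
def Cval {m nc : ℕ} (H : Matrix (Fin m) (Fin m) ℝ) (G : Matrix (Fin nc) (Fin m) ℝ)
    (A : Finset (Fin nc)) (j : Fin nc) : ℝ :=
  w0 H G j - wvec H G A j ⬝ᵥ (Wmat H G A)⁻¹.mulVec (wvec H G A j)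

/-- `c_j = C⁻¹ (wᵀ W⁻¹ b_A − b_j)`. -/
def cVal {m nc : ℕ} (H : Matrix (Fin m) (Fin m) ℝ) (G : Matrix (Fin nc) (Fin m) ℝ)
    (b : Fin nc → ℝ) (A : Finset (Fin nc)) (j : Fin nc) : ℝ :=
  (Cval H G A j)⁻¹ * (wvec H G A j ⬝ᵥ (Wmat H G A)⁻¹.mulVec (subVec b A) - b j)

/-- `v_j = C⁻¹ (S_Aᵀ W⁻¹ w − S_jᵀ)`. -/
def vVec {m n nc : ℕ} (H : Matrix (Fin m) (Fin m) ℝ) (G : Matrix (Fin nc) (Fin m) ℝ)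
    (S : Matrix (Fin nc) (Fin n) ℝ) (A : Finset (Fin nc)) (j : Fin nc) : Fin n → ℝ :=
  (Cval H G A j)⁻¹ •
    ((subRows S A)ᵀ.mulVec ((Wmat H G A)⁻¹.mulVec (wvec H G A j)) - S j)

/-- `d̃_j ∈ ℝ^{n_c}`: equal to `W⁻¹ w` on `A`, to `−1` at index `j`, and `0` elsewhere. -/
def dExt {m nc : ℕ} (H : Matrix (Fin m) (Fin m) ℝ) (G : Matrix (Fin nc) (Fin m) ℝ)
    (A : Finset (Fin nc)) (j : Fin nc) : Fin nc → ℝ :=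
  fun k =>
    if h : k ∈ A then (Wmat H G A)⁻¹.mulVec (wvec H G A j) ⟨k, h⟩
    else if k = j then -1 else 0

/-- `f_j = H⁻¹ G_{A ∪ {j}}ᵀ (d̃_j restricted to A ∪ {j})`. -/
def fVec {m nc : ℕ} (H : Matrix (Fin m) (Fin m) ℝ) (G : Matrix (Fin nc) (Fin m) ℝ)
    (A : Finset (Fin nc)) (j : Fin nc) : Fin m → ℝ :=
  (H⁻¹ * (subRows G (insert j A))ᵀ).mulVec (fun i => dExt H G A j i.val)



section AuxLemmas

variable {m n nc : ℕ}

/-- The scalar `q k l = G_k H⁻¹ G_lᵀ`. -/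
def qd (H : Matrix (Fin m) (Fin m) ℝ) (G : Matrix (Fin nc) (Fin m) ℝ) (k l : Fin nc) : ℝ :=
  G k ⬝ᵥ H⁻¹.mulVec (G l)

lemma hinv_symm {H : Matrix (Fin m) (Fin m) ℝ} (hH : H.PosDef) : H⁻¹ᵀ = H⁻¹ := by
  have := hH.inv.isHermitian.eq
  rwa [Matrix.conjTranspose_eq_transpose_of_trivial] at this

lemma qd_symm {H : Matrix (Fin m) (Fin m) ℝ} (hH : H.PosDef)
    (G : Matrix (Fin nc) (Fin m) ℝ) (k l : Fin nc) : qd H G k l = qd H G l k := by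
  unfold qd
  rw [Matrix.dotProduct_mulVec, ← Matrix.mulVec_transpose, hinv_symm hH, dotProduct_comm]

lemma wvec_apply (H : Matrix (Fin m) (Fin m) ℝ) (G : Matrix (Fin nc) (Fin m) ℝ)
    (A : Finset (Fin nc)) (j : Fin nc) (k : A) :
    wvec H G A j k = qd H G k.1 j := by
  unfold wvec qd
  rw [← Matrix.mulVec_mulVec]
  rfl

lemma Wmat_apply (H : Matrix (Fin m) (Fin m) ℝ) (G : Matrix (Fin nc) (Fin m) ℝ)
    (A : Finset (Fin nc)) (k l : A) :
    Wmat H G A k l = qd H G k.1 l.1 := by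
  have : Wmat H G A k l = wvec H G A l.1 k := by
    unfold Wmat wvec
    simp [Matrix.mul_apply, Matrix.mulVec, dotProduct, subRows, Matrix.transpose_apply]
  rw [this, wvec_apply]

lemma wmat_posDef {H : Matrix (Fin m) (Fin m) ℝ} (hH : H.PosDef)
    (G : Matrix (Fin nc) (Fin m) ℝ) (A : Finset (Fin nc)) (hA : FullRowRank G A) :
    (Wmat H G A).PosDef := by
  have hHi : (H⁻¹).PosDef := hH.inv
  refine Matrix.posDef_iff_dotProduct_mulVec.mpr ⟨?_, ?_⟩
  · rw [Matrix.IsHermitian, Matrix.conjTranspose_eq_transpose_of_trivial, Wmat,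
      Matrix.transpose_mul, Matrix.transpose_mul, Matrix.transpose_transpose,
      hinv_symm hH, Matrix.mul_assoc]
  · intro x hx
    have hz : (subRows G A)ᵀ *ᵥ x ≠ 0 := by
      intro h0
      refine hx (funext fun i => Fintype.linearIndependent_iff.mp hA x ?_ i)
      funext t
      have ht := congrFun h0 t
      simp only [Matrix.mulVec, dotProduct, Matrix.transpose_apply, subRows,
        Matrix.of_apply, Pi.zero_apply] at ht
      simpa [Finset.sum_apply, mul_comm] using ht
    have hrw : star x ⬝ᵥ (Wmat H G A) *ᵥ x
        = ((subRows G A)ᵀ *ᵥ x) ⬝ᵥ H⁻¹ *ᵥ ((subRows G A)ᵀ *ᵥ x) := by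
      rw [star_trivial, Wmat, Matrix.mul_assoc, ← Matrix.mulVec_mulVec,
        ← Matrix.mulVec_mulVec, Matrix.dotProduct_mulVec, ← Matrix.mulVec_transpose]
    rw [hrw]
    simpa using hHi.dotProduct_mulVec_pos hz

lemma wmat_mulVec_inv_mulVec {H : Matrix (Fin m) (Fin m) ℝ} (hH : H.PosDef)
    {G : Matrix (Fin nc) (Fin m) ℝ} {A : Finset (Fin nc)} (hA : FullRowRank G A)
    (v : A → ℝ) : (Wmat H G A) *ᵥ ((Wmat H G A)⁻¹ *ᵥ v) = v := by
  have hdet : IsUnit (Wmat H G A).det :=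
    isUnit_iff_ne_zero.mpr (wmat_posDef hH G A hA).det_pos.ne'
  rw [Matrix.mulVec_mulVec, Matrix.mul_nonsing_inv _ hdet, Matrix.one_mulVec]

lemma winv_symm {H : Matrix (Fin m) (Fin m) ℝ} (hH : H.PosDef)
    {G : Matrix (Fin nc) (Fin m) ℝ} {A : Finset (Fin nc)} (hA : FullRowRank G A) :
    ((Wmat H G A)⁻¹)ᵀ = (Wmat H G A)⁻¹ := by
  have := (wmat_posDef hH G A hA).inv.isHermitian.eq
  rwa [Matrix.conjTranspose_eq_transpose_of_trivial] at this

/-- `C > 0`. -/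
lemma cval_pos {H : Matrix (Fin m) (Fin m) ℝ} (hH : H.PosDef)
    {G : Matrix (Fin nc) (Fin m) ℝ} {Ai : Finset (Fin nc)} {j : Fin nc} (hj : j ∉ Ai)
    (hAi : FullRowRank G Ai) (hAj : FullRowRank G (insert j Ai)) :
    0 < Cval H G Ai j := by
  classical
  set B := subRows G Ai with hB
  set w := wvec H G Ai j with hw
  set p : Ai → ℝ := (Wmat H G Ai)⁻¹ *ᵥ w with hp
  set y : Fin m → ℝ := G j - Bᵀ *ᵥ p with hy
  have hWp : (Wmat H G Ai) *ᵥ p = w := wmat_mulVec_inv_mulVec hH hAi w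
  -- y ≠ 0
  have hyne : y ≠ 0 := by
    intro h0
    set g : {x // x ∈ insert j Ai} → ℝ :=
      fun l => if h : l.1 ∈ Ai then p ⟨l.1, h⟩ else -1 with hg
    have hsum : ∑ l : {x // x ∈ insert j Ai}, g l • G l.1 = 0 := by
      have h1 : ∑ l : {x // x ∈ insert j Ai}, g l • G l.1
          = ∑ l ∈ insert j Ai, (if h : l ∈ Ai then p ⟨l, h⟩ else -1) • G l := by
        rw [← Finset.sum_coe_sort (insert j Ai) (fun l => (if h : l ∈ Ai then p ⟨l, h⟩ else -1) • G l)]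
      rw [h1, Finset.sum_insert hj, dif_neg hj]
      have h2 : ∑ l ∈ Ai, (if h : l ∈ Ai then p ⟨l, h⟩ else -1) • G l
          = ∑ l : {x // x ∈ Ai}, p l • G l.1 := by
        rw [← Finset.sum_coe_sort Ai (fun l => (if h : l ∈ Ai then p ⟨l, h⟩ else -1) • G l)]
        exact Finset.sum_congr rfl fun l _ => by rw [dif_pos l.2]
      rw [h2]
      have h3 : ∑ l : {x // x ∈ Ai}, p l • G l.1 = Bᵀ *ᵥ p := by
        funext t
        simp [Matrix.mulVec, dotProduct, Matrix.transpose_apply, hB, subRows,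
          Finset.sum_apply, mul_comm]
      rw [h3]
      have h4 : G j = Bᵀ *ᵥ p := by
        have := congrArg (fun z => z + Bᵀ *ᵥ p) h0
        simpa [hy, sub_add_cancel] using this
      rw [← h4]; module
    have := Fintype.linearIndependent_iff.mp hAj _ hsum ⟨j, Finset.mem_insert_self j Ai⟩
    rw [hg] at this
    simp only [dif_neg hj] at this
    norm_num at this
  -- C = y ⬝ᵥ H⁻¹ y
  have key : Cval H G Ai j = y ⬝ᵥ H⁻¹ *ᵥ y := by
    have hBt : ∀ z : Fin m → ℝ, (Bᵀ *ᵥ p) ⬝ᵥ H⁻¹ *ᵥ z = p ⬝ᵥ ((B * H⁻¹) *ᵥ z) := by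
      intro z
      rw [Matrix.mulVec_transpose, ← Matrix.dotProduct_mulVec, Matrix.mulVec_mulVec]
    have hsymA : G j ⬝ᵥ H⁻¹ *ᵥ (Bᵀ *ᵥ p) = (Bᵀ *ᵥ p) ⬝ᵥ H⁻¹ *ᵥ G j := by
      rw [Matrix.dotProduct_mulVec, ← Matrix.mulVec_transpose, hinv_symm hH,
        dotProduct_comm]
    have e1 : (Bᵀ *ᵥ p) ⬝ᵥ H⁻¹ *ᵥ G j = p ⬝ᵥ w := by
      rw [hBt]; rfl
    have e2 : (Bᵀ *ᵥ p) ⬝ᵥ H⁻¹ *ᵥ (Bᵀ *ᵥ p) = p ⬝ᵥ w := by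
      rw [hBt, Matrix.mulVec_mulVec]
      have hWW : B * H⁻¹ * Bᵀ = Wmat H G Ai := rfl
      rw [hWW, hWp]
    have expand : y ⬝ᵥ H⁻¹ *ᵥ y
        = G j ⬝ᵥ H⁻¹ *ᵥ G j - G j ⬝ᵥ H⁻¹ *ᵥ (Bᵀ *ᵥ p) - (Bᵀ *ᵥ p) ⬝ᵥ H⁻¹ *ᵥ G j
          + (Bᵀ *ᵥ p) ⬝ᵥ H⁻¹ *ᵥ (Bᵀ *ᵥ p) := by
      rw [hy, Matrix.mulVec_sub, sub_dotProduct, dotProduct_sub,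
        dotProduct_sub]
      ring
    rw [expand, hsymA, e1, e2]
    unfold Cval w0
    rw [dotProduct_comm (wvec H G Ai j)]
    rw [← hw, ← hp]
    ring
  rw [key]
  simpa using hH.inv.dotProduct_mulVec_pos hyne

end AuxLemmas

/-- Theorem 2, dual part: removing constraint `j` from `A_j = A_i ∪ {j}` gives
`λ̃_{A_i}(θ) = λ̃_{A_j}(θ) − (c_i + v_iᵀθ) d̃_i`, where `c_i = c_j`, `v_i = v_j`
and `d̃_i = −d̃_j`. -/
theorem dual_rankOne_update_remove
    {m n nc : ℕ} (H : Matrix (Fin m) (Fin m) ℝ) (hH : H.PosDef)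
    (G : Matrix (Fin nc) (Fin m) ℝ) (b : Fin nc → ℝ) (S : Matrix (Fin nc) (Fin n) ℝ)
    (Ai : Finset (Fin nc)) (j : Fin nc) (hj : j ∉ Ai)
    (hAi : FullRowRank G Ai) (hAj : FullRowRank G (insert j Ai))
    (ci : ℝ) (hci : ci = cVal H G b Ai j)
    (vi : Fin n → ℝ) (hvi : vi = vVec H G S Ai j)
    (di : Fin nc → ℝ) (hdi : di = -dExt H G Ai j) :
    ∀ θ : Fin n → ℝ,
      lamExt H G b S Ai θ =
        lamExt H G b S (insert j Ai) θ - (ci + vi ⬝ᵥ θ) • di := by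
  intro θ
  classical
  subst hci hvi hdi
  set α : ℝ := cVal H G b Ai j + vVec H G S Ai j ⬝ᵥ θ with hα
  have hC : 0 < Cval H G Ai j := cval_pos hH hj hAi hAj
  have hCne : Cval H G Ai j ≠ 0 := hC.ne'
  set pv : Ai → ℝ := (Wmat H G Ai)⁻¹ *ᵥ wvec H G Ai j with hpv
  have hdotw : ∀ x : Ai → ℝ,
      wvec H G Ai j ⬝ᵥ (Wmat H G Ai)⁻¹ *ᵥ x = pv ⬝ᵥ x := by
    intro x
    rw [Matrix.dotProduct_mulVec, ← Matrix.mulVec_transpose, winv_symm hH hAi, ← hpv]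
  have hWp : Wmat H G Ai *ᵥ pv = wvec H G Ai j := by
    rw [hpv]; exact wmat_mulVec_inv_mulVec hH hAi _
  have hWlam : Wmat H G Ai *ᵥ lamOf H G b S Ai θ
      = -(fun i : Ai => b i.1 + S.mulVec θ i.1) := by
    show Wmat H G Ai *ᵥ (-((Wmat H G Ai)⁻¹ *ᵥ (fun i : Ai => b i.1 + S.mulVec θ i.1))) = _
    rw [Matrix.mulVec_neg, wmat_mulVec_inv_mulVec hH hAi]
  -- key scalar identity : α * C = pv ⬝ᵥ β_Ai − β_j
  have hαC : α * Cval H G Ai j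
      = pv ⬝ᵥ (fun i : Ai => b i.1 + S.mulVec θ i.1) - (b j + S.mulVec θ j) := by
    have h1 : vVec H G S Ai j ⬝ᵥ θ = (Cval H G Ai j)⁻¹ *
        (pv ⬝ᵥ (fun i : Ai => S.mulVec θ i.1) - S.mulVec θ j) := by
      unfold vVec
      rw [← hpv, smul_dotProduct, smul_eq_mul, sub_dotProduct]
      congr 2
      rw [Matrix.mulVec_transpose, ← Matrix.dotProduct_mulVec]
      rfl
    have h2 : cVal H G b Ai j = (Cval H G Ai j)⁻¹ *
        (pv ⬝ᵥ subVec b Ai - b j) := by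
      unfold cVal
      rw [hdotw]
    have hsplit : pv ⬝ᵥ (fun i : Ai => b i.1 + S.mulVec θ i.1)
        = pv ⬝ᵥ subVec b Ai + pv ⬝ᵥ (fun i : Ai => S.mulVec θ i.1) := by
      have he : (fun i : Ai => b i.1 + S.mulVec θ i.1)
          = subVec b Ai + (fun i : Ai => S.mulVec θ i.1) := rfl
      rw [he, dotProduct_add]
    rw [hα, h1, h2, hsplit]
    field_simp
    ring
  -- the candidate solution on A_j
  set ut : Fin nc → ℝ := fun t =>
    if h : t ∈ Ai then lamOf H G b S Ai θ ⟨t, h⟩ - α * pv ⟨t, h⟩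
    else if t = j then α else 0 with hutdef
  have hMu : Wmat H G (insert j Ai) *ᵥ
        (fun l : (insert j Ai : Finset (Fin nc)) => ut l.1)
      = fun k : (insert j Ai : Finset (Fin nc)) => -(b k.1 + S.mulVec θ k.1) := by
    funext k
    have hLHS : (Wmat H G (insert j Ai) *ᵥ
          fun l : (insert j Ai : Finset (Fin nc)) => ut l.1) k
        = ∑ l : (insert j Ai : Finset (Fin nc)), qd H G k.1 l.1 * ut l.1 := by
      simp [Matrix.mulVec, dotProduct, Wmat_apply]
    rw [hLHS, Finset.sum_coe_sort (insert j Ai) (fun l => qd H G k.1 l * ut l),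
      Finset.sum_insert hj]
    have hutj : ut j = α := by rw [hutdef]; simp [hj]
    have hsumAi : ∑ l ∈ Ai, qd H G k.1 l * ut l
        = (∑ l : Ai, qd H G k.1 l.1 * lamOf H G b S Ai θ l)
          - α * ∑ l : Ai, qd H G k.1 l.1 * pv l := by
      rw [← Finset.sum_coe_sort Ai (fun l => qd H G k.1 l * ut l)]
      have hc : ∀ l : Ai, qd H G k.1 l.1 * ut l.1
          = qd H G k.1 l.1 * lamOf H G b S Ai θ l - α * (qd H G k.1 l.1 * pv l) := by
        intro l
        rw [hutdef]
        simp only [dif_pos l.2]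
        ring
      rw [Fintype.sum_congr _ _ hc, Finset.sum_sub_distrib, ← Finset.mul_sum]
    rw [hutj, hsumAi]
    rcases Finset.mem_insert.mp k.2 with hk | hk
    · -- k = j
      have ht1 : ∑ l : Ai, qd H G k.1 l.1 * lamOf H G b S Ai θ l
          = -(pv ⬝ᵥ fun i : Ai => b i.1 + S.mulVec θ i.1) := by
        have hc : ∀ l : Ai, qd H G k.1 l.1 * lamOf H G b S Ai θ l
            = wvec H G Ai j l * lamOf H G b S Ai θ l := by
          intro l
          rw [hk, qd_symm hH, ← wvec_apply]
        rw [Fintype.sum_congr _ _ hc]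
        have hd : wvec H G Ai j ⬝ᵥ lamOf H G b S Ai θ
            = -(pv ⬝ᵥ fun i : Ai => b i.1 + S.mulVec θ i.1) := by
          show wvec H G Ai j ⬝ᵥ
              (-((Wmat H G Ai)⁻¹ *ᵥ (fun i : Ai => b i.1 + S.mulVec θ i.1))) = _
          rw [dotProduct_neg, hdotw]
        exact hd
      have ht2 : ∑ l : Ai, qd H G k.1 l.1 * pv l = w0 H G j - Cval H G Ai j := by
        have hc : ∀ l : Ai, qd H G k.1 l.1 * pv l = wvec H G Ai j l * pv l := by
          intro l
          rw [hk, qd_symm hH, ← wvec_apply]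
        rw [Fintype.sum_congr _ _ hc]
        show wvec H G Ai j ⬝ᵥ pv = _
        unfold Cval
        rw [← hpv]
        ring
      have hqjj : qd H G k.1 j = w0 H G j := by rw [hk]; rfl
      rw [ht1, ht2, hqjj, hk]
      linear_combination hαC
    · -- k ∈ Ai
      have ht1 : ∑ l : Ai, qd H G k.1 l.1 * lamOf H G b S Ai θ l
          = -(b k.1 + S.mulVec θ k.1) := by
        have h := congrFun hWlam ⟨k.1, hk⟩
        have h2 : (Wmat H G Ai *ᵥ lamOf H G b S Ai θ) ⟨k.1, hk⟩
            = ∑ l : Ai, qd H G k.1 l.1 * lamOf H G b S Ai θ l := by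
          simp [Matrix.mulVec, dotProduct, Wmat_apply]
        rw [h2] at h
        simpa using h
      have ht2 : ∑ l : Ai, qd H G k.1 l.1 * pv l = qd H G k.1 j := by
        have h := congrFun hWp ⟨k.1, hk⟩
        have h2 : (Wmat H G Ai *ᵥ pv) ⟨k.1, hk⟩
            = ∑ l : Ai, qd H G k.1 l.1 * pv l := by
          simp [Matrix.mulVec, dotProduct, Wmat_apply]
        rw [h2, wvec_apply] at h
        exact h
      rw [ht1, ht2]
      ring
  have hdetAj : IsUnit (Wmat H G (insert j Ai)).det :=
    isUnit_iff_ne_zero.mpr (wmat_posDef hH G _ hAj).det_pos.ne'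
  have hlamAj : lamOf H G b S (insert j Ai) θ
      = fun l : (insert j Ai : Finset (Fin nc)) => ut l.1 := by
    have h0 : (fun i : (insert j Ai : Finset (Fin nc)) => b i.1 + S.mulVec θ i.1)
        = -(Wmat H G (insert j Ai) *ᵥ
            fun l : (insert j Ai : Finset (Fin nc)) => ut l.1) := by
      rw [hMu]
      funext i
      simp
    show -((Wmat H G (insert j Ai))⁻¹ *ᵥ
        (fun i : (insert j Ai : Finset (Fin nc)) => b i.1 + S.mulVec θ i.1)) = _
    rw [h0, Matrix.mulVec_neg, neg_neg, Matrix.mulVec_mulVec,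
      Matrix.nonsing_inv_mul _ hdetAj, Matrix.one_mulVec]
  -- conclude
  funext k
  simp only [Pi.sub_apply, Pi.smul_apply, Pi.neg_apply, smul_eq_mul]
  unfold lamExt dExt
  by_cases hk : k ∈ Ai
  · have hk' : k ∈ insert j Ai := Finset.mem_insert_of_mem hk
    rw [dif_pos hk, dif_pos hk', dif_pos hk, hlamAj, ← hpv]
    simp only [hutdef, dif_pos hk]
    ring
  · by_cases hkj : k = j
    · subst hkj
      have hk' : k ∈ insert k Ai := Finset.mem_insert_self k Ai
      rw [dif_neg hk, dif_pos hk', dif_neg hk, if_pos rfl, hlamAj]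
      simp only [hutdef, dif_neg hk, if_pos rfl]
      simp
    · have hk' : k ∉ insert j Ai := by simp [Finset.mem_insert, hkj, hk]
      rw [dif_neg hk, dif_neg hk', dif_neg hk, if_neg hkj]
      ring

end MpQP
end
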